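/- arXiv:1105.6047 — 2 statements merged into one kernel-verified Lean document; each statement's English description precedes it below -/
import Mathlib

section
/- Consider the controlled chain X̄^n with controls v_j^n equal to ν_0(ψ̇*(j/n)|j/n) when 0 ≤ j ≤ ⌊δn⌋, or when j ≥ ⌈δn⌉ and X̄^n_i(j) ≥ (θ/4)(e_iδ + c_i) for all 0 ≤ i ≤ d+1, and equal to the natural increment distribution ρ otherwise; let M^n(j) be the associated martingale M^n(j) := X̄^n(j) − (1/n)Σ_{l<j} Ē(Ȳ^n(l)|X̄^n(l)) − c^d, let τ_n := n ∧ min{⌈δn⌉ ≤ l ≤ n : X̄^n_i(l) < (θ/4)(e_iδ + c_i) for some 0 ≤ i ≤ d+1}, and let 𝔸_n := {sup_{0≤j≤n} |M^n(j∧τ_n)| > θe_{d+1}/(4n^{1/8})}. Then for all n ≥ δ^{−8}, on the event 𝔸_n^c one has τ_n = n. -/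
open MeasureTheory Real Set Filter Topology
open scoped ENNReal

noncomputable section

attribute [local instance] Classical.propDecidable

/-! ## Basic setting -/

abbrev I01 : Set ℝ := Set.Icc (0:ℝ) 1

def pt0 : I01 := ⟨0, Set.left_mem_Icc.mpr zero_le_one⟩

/-- Piecewise continuity on `[0,1]`: continuity off finitely many points. -/
def PiecewiseContinuousOn01 (f : ℝ → ℝ) : Prop :=
  ∃ D : Finset ℝ, ∀ t ∈ Set.Icc (0:ℝ) 1, t ∉ D → ContinuousWithinAt f (Set.Icc (0:ℝ) 1) t

/-- Piecewise continuity on `[0,∞)`. -/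
def PiecewiseContinuousOnIci (f : ℝ → ℝ) : Prop :=
  ∃ D : Set ℝ, (∀ T > (0:ℝ), (D ∩ Set.Icc 0 T).Finite) ∧
    ∀ t ∈ Set.Ici (0:ℝ), t ∉ D → ContinuousWithinAt f (Set.Ici (0:ℝ)) t

/-- Assumption (ND) on the time-dependent parameters `p, β`. -/
structure ND (p β : ℝ → ℝ) (p0 β0 β1 : ℝ) : Prop where
  p_nonneg : ∀ t ∈ Set.Icc (0:ℝ) 1, 0 ≤ p t
  p_le : ∀ t ∈ Set.Icc (0:ℝ) 1, p t ≤ p0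
  p0_lt_one : p0 < 1
  β_lb : ∀ t ∈ Set.Icc (0:ℝ) 1, β0 ≤ β t
  β_ub : ∀ t ∈ Set.Icc (0:ℝ) 1, β t ≤ β1
  β0_pos : 0 < β0
  p_pc : PiecewiseContinuousOn01 p
  β_pc : PiecewiseContinuousOn01 β

/-- Assumption (ND), extended to `[0,∞)`. -/
structure NDIci (p β : ℝ → ℝ) (p0 β0 β1 : ℝ) : Prop where
  p_nonneg : ∀ t ∈ Set.Ici (0:ℝ), 0 ≤ p t
  p_le : ∀ t ∈ Set.Ici (0:ℝ), p t ≤ p0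
  p0_lt_one : p0 < 1
  β_lb : ∀ t ∈ Set.Ici (0:ℝ), β0 ≤ β t
  β_ub : ∀ t ∈ Set.Ici (0:ℝ), β t ≤ β1
  β0_pos : 0 < β0
  p_pc : PiecewiseContinuousOnIci p
  β_pc : PiecewiseContinuousOnIci β

/-- The limiting initial data `(c_i)`, `c = Σ_i c_i`, `c̃ = Σ_i i c_i` of assumption (LIM). -/
structure LIMc (c : ℕ → ℝ) (cc ctil : ℝ) : Prop where
  nonneg : ∀ i, 0 ≤ c i
  summable : Summable c
  cc_eq : cc = ∑' i, c i
  mul_summable : Summable (fun i : ℕ => (i : ℝ) * c i)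
  ctil_eq : ctil = ∑' i : ℕ, (i : ℝ) * c i

/-- Assumption (LIM) for the array of initial urn configurations `init n i = Z_i^n(0)`. -/
structure LIM (init : ℕ → ℕ → ℕ) (c : ℕ → ℝ) (cc ctil : ℝ) : Prop where
  c_lim : ∀ i, Tendsto (fun n : ℕ => (init n i : ℝ) / n) atTop (𝓝 (c i))
  ctil_lim : Tendsto (fun n : ℕ => ∑' i : ℕ, (i : ℝ) * (init n i : ℝ) / n) atTop (𝓝 ctil)
  ctil_eq : ctil = ∑' i : ℕ, (i : ℝ) * c i
  mul_summable : Summable (fun i : ℕ => (i : ℝ) * c i)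
  c_summable : Summable c
  cc_eq : cc = ∑' i, c i
  finite_support : ∀ n, ∃ K, ∀ k, K ≤ k → init n k = 0

/-- The total-weight normalization `σ(t) = (1+β(t))t + c̃ + cβ(t)`. -/
def sigf (β : ℝ → ℝ) (cc ctil t : ℝ) : ℝ := (1 + β t) * t + ctil + cc * β t

/-- The truncated initial vector `c^d = (c_0, …, c_d, Σ_{i>d} c_i)`. -/
def cvec (d : ℕ) (c : ℕ → ℝ) : Fin (d+2) → ℝ :=
  fun i => if (i : ℕ) ≤ d then c i else ∑' k : ℕ, c (k + (d+1))

/-- View a vector in `ℝ^{d+2}` as an `ℕ`-indexed sequence (zero for large indices). -/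
def toN {d : ℕ} (g : Fin (d+2) → ℝ) : ℕ → ℝ := fun i => if h : i < d+2 then g ⟨i, h⟩ else 0

/-- `ℕ`-indexed version of `c^d`. -/
def cvecN (d : ℕ) (c : ℕ → ℝ) : ℕ → ℝ := toN (cvec d c)

/-- Extension of a path on `[0,1]` to all of `ℝ` (constant outside `[0,1]`). -/
def pext {d : ℕ} (φ : C(I01, Fin (d+2) → ℝ)) : ℝ → Fin (d+2) → ℝ :=
  fun t => φ (Set.projIcc 0 1 zero_le_one t)

/-- Coordinatewise derivative of a path. -/
def pderivC {d : ℕ} (φ : C(I01, Fin (d+2) → ℝ)) (t : ℝ) (i : Fin (d+2)) : ℝ :=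
  deriv (fun s => pext φ s i) t

def xofN {d : ℕ} (φ : C(I01, Fin (d+2) → ℝ)) (t : ℝ) : ℕ → ℝ := toN (pext φ t)

def vofN {d : ℕ} (φ : C(I01, Fin (d+2) → ℝ)) (t : ℝ) : ℕ → ℝ := toN (fun i => pderivC φ t i)

/-! ## The rate function integrand, with the conventions `0·log 0 = 0/0 = 0`, `1/0 = ∞` -/

/-- `a log(a/b)` as an extended real, with the conventions `0 log 0 = 0·(0/0) = 0` and
`a log(a/0) = ∞` for `a ≠ 0`. -/
def entTerm (a b : ℝ) : EReal :=
  if a = 0 then (0 : EReal) else if b ≤ 0 then (⊤ : EReal)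
  else ((a * Real.log (a / b) : ℝ) : EReal)

/-- `1 - [v]_i`, the numerator attached to the increment `f_i`. -/
def numA (v : ℕ → ℝ) (i : ℕ) : ℝ := 1 - ∑ l ∈ Finset.range (i+1), v l

/-- `1 - Σ_{i=0}^d (1-[v]_i)`, the numerator attached to the increment `f_{d+1}`. -/
def numALast (v : ℕ → ℝ) (d : ℕ) : ℝ := 1 - ∑ i ∈ Finset.range (d+1), numA v i

/-- The natural increment probabilities `u_i`, `0 ≤ i ≤ d`. -/
def denB (p β : ℝ → ℝ) (cc ctil : ℝ) (t : ℝ) (x : ℕ → ℝ) (i : ℕ) : ℝ :=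
  if i = 0 then p t + (1 - p t) * (β t * x 0 / sigf β cc ctil t)
  else (1 - p t) * (((i : ℝ) + β t) * x i / sigf β cc ctil t)

/-- The natural increment probability `u_{d+1}`. -/
def denBLast (p β : ℝ → ℝ) (cc ctil : ℝ) (t : ℝ) (x : ℕ → ℝ) (d : ℕ) : ℝ :=
  (1 - p t) * (1 - (∑ i ∈ Finset.range (d+1), ((i : ℝ) + β t) * x i) / sigf β cc ctil t)

/-- The relative-entropy integrand `L_d(t, x, ẋ)` of the rate function `I_d`. -/
def LdE (p β : ℝ → ℝ) (cc ctil : ℝ) (d : ℕ) (t : ℝ) (x v : ℕ → ℝ) : EReal :=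
  (∑ i ∈ Finset.range (d+1), entTerm (numA v i) (denB p β cc ctil t x i))
    + entTerm (numALast v d) (denBLast p β cc ctil t x d)

/-- The set `Γ_d` of admissible paths. -/
def Gamma (d : ℕ) (c : ℕ → ℝ) : Set (C(I01, Fin (d+2) → ℝ)) :=
  {φ | (∀ i, φ pt0 i = cvec d c i)
    ∧ (∀ (t : I01) (i : Fin (d+2)), 0 ≤ φ t i)
    ∧ (∀ i : Fin (d+2), LipschitzWith 1 (fun t : ℝ => pext φ t i))
    ∧ (∀ᵐ t ∂(volume.restrict (Set.Icc (0:ℝ) 1)),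
        (∀ i ≤ d, 0 ≤ ∑ l ∈ Finset.range (i+1), vofN φ t l
            ∧ ∑ l ∈ Finset.range (i+1), vofN φ t l ≤ 1)
        ∧ (∑ i ∈ Finset.range (d+2), vofN φ t i = 1)
        ∧ (∑ i ∈ Finset.range (d+2), (i : ℝ) * vofN φ t i
            = ∑ i ∈ Finset.range (d+1), numA (vofN φ t) i)
        ∧ ∑ i ∈ Finset.range (d+1), numA (vofN φ t) i ≤ 1)}

/-- Extended reals to `[0,∞]`, sending `⊤` to `⊤` and negatives to `0`. -/
def erealToENNReal (x : EReal) : ℝ≥0∞ := if x = ⊤ then ⊤ else ENNReal.ofReal x.toReal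

/-- The finite-dimensional rate function `I_d`. -/
def Irate (p β : ℝ → ℝ) (c : ℕ → ℝ) (cc ctil : ℝ) (d : ℕ)
    (φ : C(I01, Fin (d+2) → ℝ)) : ℝ≥0∞ :=
  if φ ∈ Gamma d c then
    ∫⁻ t in Set.Icc (0:ℝ) 1, erealToENNReal (LdE p β cc ctil d t (xofN φ t) (vofN φ t))
  else ⊤

/-- The large deviation principle with rate `n` and good rate function `I`:
compact level sets, upper bound over closed sets, lower bound over open sets. -/
def IsLDP {Ω : Type*} [MeasurableSpace Ω] {Y : Type*} [TopologicalSpace Y]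
    (μ : Measure Ω) (Xn : ℕ → Ω → Y) (I : Y → ℝ≥0∞) : Prop :=
  (∀ M : ℝ≥0∞, M ≠ ⊤ → IsCompact {x | I x ≤ M})
  ∧ (∀ F : Set Y, IsClosed F →
      Filter.limsup (fun n : ℕ => ((Real.log ((μ ((Xn n) ⁻¹' F)).toReal) / n : ℝ) : EReal))
          Filter.atTop ≤ -((⨅ x ∈ F, I x : ℝ≥0∞) : EReal))
  ∧ (∀ G : Set Y, IsOpen G →
      -((⨅ x ∈ G, I x : ℝ≥0∞) : EReal)
        ≤ Filter.liminf (fun n : ℕ => ((Real.log ((μ ((Xn n) ⁻¹' G)).toReal) / n : ℝ) : EReal))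
            Filter.atTop)

/-- Convexity of an `[0,∞]`-valued rate function. -/
def ConvexRate {Y : Type*} [AddCommMonoid Y] [Module ℝ Y] (I : Y → ℝ≥0∞) : Prop :=
  ∀ x y : Y, ∀ a b : ℝ, 0 ≤ a → 0 ≤ b → a + b = 1 →
    I (a • x + b • y) ≤ ENNReal.ofReal a * I x + ENNReal.ofReal b * I y

/-- The `L¹` norm on `ℝ^{d+2}`. -/
def l1norm {d : ℕ} (v : Fin (d+2) → ℝ) : ℝ := ∑ i, |v i|

/-! ## The time-dependent preferential attachment urn process -/

/-- Effect of the increment `f_i` on an urn configuration `z` (`z k` = number of urns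
with exactly `k` balls): for `i = 0` a ball enters an urn of size `0` (or the new urn);
for `i ≥ 1` a new empty urn is created and an urn of size `i` becomes one of size `i+1`. -/
def applyF (i : ℕ) (z : ℕ → ℕ) : ℕ → ℕ :=
  if i = 0 then Function.update z 1 (z 1 + 1)
  else fun k => if k = 0 then z 0 + 1 else if k = i then z i - 1
    else if k = i + 1 then z (i+1) + 1 else z k

/-- Total weight `Σ_k (k + β) z_k` of a configuration. -/
def urnWeight (βv : ℝ) (z : ℕ → ℕ) : ℝ := ∑' k : ℕ, ((k : ℝ) + βv) * (z k : ℝ)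

/-- One-step transition probability of the urn scheme from `z` to `z'`. -/
def stepProb (pv βv : ℝ) (z z' : ℕ → ℕ) : ℝ :=
  ∑' i : ℕ,
    if z' = applyF i z then
      (if i = 0 then pv + (1 - pv) * (βv * (z 0 : ℝ) / urnWeight βv z)
       else (1 - pv) * (((i : ℝ) + βv) * (z i : ℝ) / urnWeight βv z))
    else 0

/-- `Z n j ω k` is the number of urns with `k` balls at step `j` in the `n`-th row; the law
of each row is that of the time-dependent preferential attachment urn Markov chain. -/
def UrnLaw {Ω : Type*} [MeasurableSpace Ω] (μ : Measure Ω) (p β : ℝ → ℝ)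
    (init : ℕ → ℕ → ℕ) (Z : ℕ → ℕ → Ω → ℕ → ℕ) : Prop :=
  (∀ n ω, Z n 0 ω = init n) ∧
  ∀ n : ℕ, 1 ≤ n → ∀ traj : ℕ → ℕ → ℕ, traj 0 = init n →
    μ {ω | ∀ j ≤ n, Z n j ω = traj j}
      = ENNReal.ofReal (∏ j ∈ Finset.range n,
          stepProb (p ((j : ℝ) / n)) (β ((j : ℝ) / n)) (traj j) (traj (j+1)))

/-- Truncated degree vector `(Z_0, …, Z_d, Z̄_{d+1})` of a configuration. -/
def Ztrunc (d : ℕ) (z : ℕ → ℕ) : Fin (d+2) → ℝ :=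
  fun i => if (i : ℕ) ≤ d then (z i : ℝ) else ∑' k : ℕ, (z (k + (d+1)) : ℝ)

/-- `X n` is the path `X^{n,d}`, the linear interpolation of `(1/n) Z^{n,d}(⌊nt⌋)`. -/
def InterpD {Ω : Type*} (d : ℕ) (Z : ℕ → ℕ → Ω → ℕ → ℕ)
    (X : ℕ → Ω → C(I01, Fin (d+2) → ℝ)) : Prop :=
  ∀ n : ℕ, 1 ≤ n → ∀ ω (t : I01) (i : Fin (d+2)),
    X n ω t i
      = (1 - ((n : ℝ) * (t : ℝ) - (⌊(n : ℝ) * (t : ℝ)⌋₊ : ℝ)))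
          * Ztrunc d (Z n ⌊(n : ℝ) * (t : ℝ)⌋₊ ω) i / n
        + ((n : ℝ) * (t : ℝ) - (⌊(n : ℝ) * (t : ℝ)⌋₊ : ℝ))
          * Ztrunc d (Z n (⌊(n : ℝ) * (t : ℝ)⌋₊ + 1) ω) i / n

/-- `X n` is the path `X^{n,∞}`, the linear interpolation of `(1/n) Z^{n,∞}(⌊nt⌋)`. -/
def InterpInf {Ω : Type*} (Z : ℕ → ℕ → Ω → ℕ → ℕ)
    (X : ℕ → Ω → ∀ _ : ℕ, C(I01, ℝ)) : Prop :=
  ∀ n : ℕ, 1 ≤ n → ∀ ω (i : ℕ) (t : I01),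
    X n ω i t
      = (1 - ((n : ℝ) * (t : ℝ) - (⌊(n : ℝ) * (t : ℝ)⌋₊ : ℝ)))
          * (Z n ⌊(n : ℝ) * (t : ℝ)⌋₊ ω i : ℝ) / n
        + ((n : ℝ) * (t : ℝ) - (⌊(n : ℝ) * (t : ℝ)⌋₊ : ℝ))
          * (Z n (⌊(n : ℝ) * (t : ℝ)⌋₊ + 1) ω i : ℝ) / n

/-! ## The infinite-dimensional rate function -/

def extOne (f : C(I01, ℝ)) : ℝ → ℝ := fun t => f (Set.projIcc 0 1 zero_le_one t)

def xofInf (ξ : ∀ _ : ℕ, C(I01, ℝ)) (t : ℝ) : ℕ → ℝ := fun i => extOne (ξ i) t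

def vofInf (ξ : ∀ _ : ℕ, C(I01, ℝ)) (t : ℝ) : ℕ → ℝ := fun i => deriv (extOne (ξ i)) t

/-- The set `Γ^∞` of admissible infinite-dimensional paths. -/
def GammaInf (c : ℕ → ℝ) : Set (∀ _ : ℕ, C(I01, ℝ)) :=
  {ξ | (∀ i, ξ i pt0 = c i)
    ∧ (∀ i (t : I01), 0 ≤ ξ i t)
    ∧ (∀ i, LipschitzWith 1 (extOne (ξ i)))
    ∧ (∀ t : I01, Summable (fun i => ξ i t))
    ∧ (∀ᵐ t ∂(volume.restrict (Set.Icc (0:ℝ) 1)),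
        (∀ i : ℕ, 0 ≤ ∑ l ∈ Finset.range (i+1), vofInf ξ t l
            ∧ ∑ l ∈ Finset.range (i+1), vofInf ξ t l ≤ 1)
        ∧ HasDerivAt (fun s : ℝ => ∑' i, extOne (ξ i) s) 1 t
        ∧ Summable (fun i => numA (vofInf ξ t) i)
        ∧ ∑' i, numA (vofInf ξ t) i ≤ 1)}

/-- The infinite-dimensional rate function `I^∞`. -/
def IrateInf (p β : ℝ → ℝ) (c : ℕ → ℝ) (cc ctil : ℝ) (ξ : ∀ _ : ℕ, C(I01, ℝ)) : ℝ≥0∞ :=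
  if ξ ∈ GammaInf c then
    ∫⁻ t in Set.Icc (0:ℝ) 1,
      ⨆ d : ℕ, erealToENNReal (LdE p β cc ctil d t (xofInf ξ t) (vofInf ξ t))
  else ⊤

/-! ## Projective limit setting -/

/-- The truncation `p_{ij} : ℝ^{j+2} → ℝ^{i+2}`, `(x_0,…,x_{j+1}) ↦ (x_0,…,x_i, Σ_{l>i} x_l)`. -/
def truncMap (i j : ℕ) (_hij : i ≤ j) : (Fin (j+2) → ℝ) → (Fin (i+2) → ℝ) :=
  fun x k =>
    if (k : ℕ) ≤ i then x (Fin.castLE (by omega) k)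
    else ∑ l : Fin (j+2), if i + 1 ≤ (l : ℕ) then x l else 0

lemma truncMap_continuous (i j : ℕ) (hij : i ≤ j) : Continuous (truncMap i j hij) := by
  apply continuous_pi
  intro k
  show Continuous fun x : Fin (j+2) → ℝ => truncMap i j hij x k
  by_cases h : (k : ℕ) ≤ i
  · simp only [truncMap, if_pos h]
    exact continuous_apply _
  · simp only [truncMap, if_neg h]
    apply continuous_finset_sum
    intro l _
    by_cases hl : i + 1 ≤ (l : ℕ)
    · simp only [if_pos hl]; exact continuous_apply _
    · simp only [if_neg hl]; exact continuous_const

/-- The projection `p_{ij} : 𝒴_j → 𝒴_i` on path spaces. -/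
def projMapC (i j : ℕ) (hij : i ≤ j) (φ : C(I01, Fin (j+2) → ℝ)) : C(I01, Fin (i+2) → ℝ) :=
  ⟨fun t => truncMap i j hij (φ t), (truncMap_continuous i j hij).comp φ.continuous⟩

/-- The projective limit `lim← 𝒴_j ⊆ Π_j 𝒴_j`. -/
def ProjLim : Set (∀ j : ℕ, C(I01, Fin (j+2) → ℝ)) :=
  {x | ∀ (i j : ℕ) (hij : i ≤ j), projMapC i j hij (x j) = x i}

/-- `Γ* ⊆ lim← 𝒴_j`: compatible families with all coordinates admissible. -/
def GammaStar (c : ℕ → ℝ) : Set (∀ j : ℕ, C(I01, Fin (j+2) → ℝ)) :=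
  {x | x ∈ ProjLim ∧ ∀ d, x d ∈ Gamma d c}

/-- The projective-limit rate function `J^∞(φ) = sup_d I_d(p_d φ)`. -/
def Jinf (p β : ℝ → ℝ) (c : ℕ → ℝ) (cc ctil : ℝ)
    (x : ∀ j : ℕ, C(I01, Fin (j+2) → ℝ)) : ℝ≥0∞ :=
  if x ∈ ProjLim then ⨆ d : ℕ, Irate p β c cc ctil d (x d) else ⊤

/-! ## Carathéodory solutions of the LLN ODE systems -/

/-- A Carathéodory solution on `[0,T]` of `ẋ = F(t,x)`, `x(0) = x₀`, in coordinates `≤ N`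
(equivalently, a solution of the associated integral equation). -/
def IsCaraSol (F : ℝ → (ℕ → ℝ) → ℕ → ℝ) (x0 : ℕ → ℝ) (N : ℕ) (T : ℝ) (f : ℝ → ℕ → ℝ) : Prop :=
  ∀ i ≤ N, IntervalIntegrable (fun s => F s (f s) i) volume 0 T ∧
    ∀ t ∈ Set.Icc (0:ℝ) T, f t i = x0 i + ∫ s in (0:ℝ)..t, F s (f s) i

/-- A Carathéodory solution on `[0,∞)`. -/
def IsCaraSolIci (F : ℝ → (ℕ → ℝ) → ℕ → ℝ) (x0 : ℕ → ℝ) (N : ℕ) (f : ℝ → ℕ → ℝ) : Prop :=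
  ∀ i ≤ N, (∀ T > (0:ℝ), IntervalIntegrable (fun s => F s (f s) i) volume 0 T) ∧
    ∀ t ∈ Set.Ici (0:ℝ), f t i = x0 i + ∫ s in (0:ℝ)..t, F s (f s) i

/-- The vector field of the LLN ODE system, coordinates `i ≥ 0`. -/
def LLNfield0 (p β : ℝ → ℝ) (cc ctil : ℝ) (t : ℝ) (x : ℕ → ℝ) : ℕ → ℝ := fun i =>
  if i = 0 then 1 - p t - (1 - p t) * (β t * x 0 / sigf β cc ctil t)
  else (if i = 1 then p t else 0)
    + (1 - p t) * ((((i : ℝ) - 1) + β t) * x (i-1) / sigf β cc ctil t)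
    - (1 - p t) * (((i : ℝ) + β t) * x i / sigf β cc ctil t)

/-- The vector field of the `d`-dimensional LLN ODE system (with the last coordinate
`φ̇_{d+1} = 1 - Σ_{i≤d} φ̇_i`). -/
def LLNfield (p β : ℝ → ℝ) (cc ctil : ℝ) (d : ℕ) (t : ℝ) (x : ℕ → ℝ) : ℕ → ℝ := fun i =>
  if i ≤ d then LLNfield0 p β cc ctil t x i
  else if i = d + 1 then 1 - ∑ l ∈ Finset.range (d+1), LLNfield0 p β cc ctil t x l
  else 0

/-- Truncation of an infinite family `ζ` to the `d`-dimensional path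
`(ζ_0, …, ζ_d, ζ̄_{d+1})` with `ζ̄_{d+1}(t) = t + c - Σ_{i≤d} ζ_i(t)`. -/
def truncSol (d : ℕ) (cc : ℝ) (ζ : ℕ → ℝ → ℝ) : ℝ → ℕ → ℝ := fun t i =>
  if i ≤ d then ζ i t
  else if i = d + 1 then t + cc - ∑ l ∈ Finset.range (d+1), ζ l t
  else 0

/-- The integrating factor `M_i(s,t) = exp[-∫_s^t (1-p(u))(i+β(u))/σ(u) du]`. -/
def Mfac (p β : ℝ → ℝ) (cc ctil : ℝ) (i : ℕ) (s t : ℝ) : ℝ :=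
  Real.exp (-(∫ u in s..t, (1 - p u) * (((i : ℝ) + β u) / sigf β cc ctil u)))

/-- The explicit solution formulas of the LLN ODE system. -/
def zetaExpl (p β : ℝ → ℝ) (cc ctil : ℝ) (c : ℕ → ℝ) : ℕ → ℝ → ℝ
  | 0 => fun t => c 0 * Mfac p β cc ctil 0 0 t
      + ∫ s in (0:ℝ)..t, (1 - p s) * Mfac p β cc ctil 0 s t
  | (i+1) => fun t => c (i+1) * Mfac p β cc ctil (i+1) 0 t
      + ∫ s in (0:ℝ)..t,
          ((if i = 0 then p s else 0)
            + (1 - p s) * (((i : ℝ) + β s) * zetaExpl p β cc ctil c i s / sigf β cc ctil s))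
          * Mfac p β cc ctil (i+1) s t

/-- The scalar field `G(t,x)` of the comparison ODE. -/
def Gfield (p β : ℝ → ℝ) (cc ctil : ℝ) (t x : ℝ) : ℝ :=
  p t + (1 - p t) * ((x + β t * (t + cc)) / sigf β cc ctil t)

/-- A scalar Carathéodory solution on `[0,∞)`. -/
def IsCaraScalIci (G : ℝ → ℝ → ℝ) (x0 : ℝ) (f : ℝ → ℝ) : Prop :=
  (∀ T > (0:ℝ), IntervalIntegrable (fun s => G s (f s)) volume 0 T) ∧
    ∀ t ∈ Set.Ici (0:ℝ), f t = x0 + ∫ s in (0:ℝ)..t, G s (f s)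

/-- The vector field of the comparison system `O(o₁,o₂,o₃,o₄,o₅)` (coordinates `0 ≤ i ≤ d`). -/
def OField (o1 o2 o3 o4 o5 : ℝ) (d : ℕ) (t : ℝ) (x : ℕ → ℝ) : ℕ → ℝ := fun i =>
  if i = 0 then 1 - o1 - (1 - o2) * (o3 / (1 + o4)) * (x 0 / (t + o5))
  else if i ≤ d then
    (if i = 1 then o1 else 0)
      + (1 - o2) / (1 + o4) * (((((i : ℝ) - 1) + o3) * x (i-1) - ((i : ℝ) + o3) * x i) / (t + o5))
  else 0

/-! ## Constructions for the lower bound -/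

/-- Convex combination `φ_θ = (1-θ)φ* + θℓ`. -/
def phiMix {d : ℕ} (θ : ℝ) (φstar ℓC : C(I01, Fin (d+2) → ℝ)) : C(I01, Fin (d+2) → ℝ) :=
  (1 - θ) • φstar + θ • ℓC

/-- Block time-average `γ_κ` of the derivative of `φ` on the `κ`-block partition of `[0,1]`
(with `γ_κ(1) = γ_κ(1 - 1/κ)`). -/
def blockAvg {d : ℕ} (φ : C(I01, Fin (d+2) → ℝ)) (κ : ℕ) (t : ℝ) (i : Fin (d+2)) : ℝ :=
  (κ : ℝ) * ∫ s in (((min ⌊t * κ⌋₊ (κ-1) : ℕ) : ℝ)/κ)..((((min ⌊t * κ⌋₊ (κ-1) : ℕ) : ℝ) + 1)/κ),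
      pderivC φ s i

/-- The regularized path `ψ_κ(t) = c^d + ∫_0^t γ_κ(s) ds`. -/
def psiKappa {d : ℕ} (φ : C(I01, Fin (d+2) → ℝ)) (κ : ℕ) (c : ℕ → ℝ) (t : ℝ)
    (i : Fin (d+2)) : ℝ :=
  cvec d c i + ∫ s in (0:ℝ)..t, blockAvg φ κ s i

/-- The increment vectors `f_0, …, f_{d+1}` of the truncated chain. -/
def fvec (d : ℕ) (i : ℕ) : Fin (d+2) → ℝ := fun k =>
  if i = 0 then (if (k : ℕ) = 1 then 1 else 0)
  else if i ≤ d then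
    (if (k : ℕ) = 0 then 1 else 0) + (if (k : ℕ) = i then -1 else 0)
      + (if (k : ℕ) = i + 1 then 1 else 0)
  else if (k : ℕ) = 0 then 1 else 0

/-- The switching times `t_i = δ - Σ_{l=i}^d (δ + [c^d]_l - [ψ_κ(δ)]_l)`, `t_{d+1} = δ`. -/
def tSwitch {d : ℕ} (ψδ : Fin (d+2) → ℝ) (c : ℕ → ℝ) (δ : ℝ) : ℕ → ℝ := fun i =>
  if i ≤ d then
    δ - ∑ l ∈ Finset.Icc i d,
      (δ + (∑ m ∈ Finset.range (l+1), cvecN d c m) - (∑ m ∈ Finset.range (l+1), toN ψδ m))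
  else δ

/-- The modified step derivative `γ*`: increment `f_{d+1}` on `[0,t_0)`, `f_i` on
`[t_i, t_{i+1})` before time `δ`, and `γ_κ` from `δ` on. -/
def gammaStar {d : ℕ} (g : ℝ → Fin (d+2) → ℝ) (ts : ℕ → ℝ) (δ : ℝ) (t : ℝ) :
    Fin (d+2) → ℝ :=
  if δ ≤ t then g t
  else if t < ts 0 then fvec d (d+1)
  else fvec d (sSup {i : ℕ | i ≤ d ∧ ts i ≤ t})

def tSwitchFull {d : ℕ} (φstar ℓC : C(I01, Fin (d+2) → ℝ)) (θ : ℝ) (κ : ℕ) (c : ℕ → ℝ)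
    (δ : ℝ) : ℕ → ℝ :=
  tSwitch (fun i => psiKappa (phiMix θ φstar ℓC) κ c δ i) c δ

/-- `ψ̇* = γ*` built from the data `φ*, ℓ, θ, κ, δ`. -/
def gammaStarFull {d : ℕ} (φstar ℓC : C(I01, Fin (d+2) → ℝ)) (θ : ℝ) (κ : ℕ) (c : ℕ → ℝ)
    (δ : ℝ) : ℝ → Fin (d+2) → ℝ :=
  gammaStar (fun t => blockAvg (phiMix θ φstar ℓC) κ t) (tSwitchFull φstar ℓC θ κ c δ) δ

/-- The modified path `ψ*(t) = c^d + ∫_0^t γ*(s) ds`. -/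
def psiStarFull {d : ℕ} (φstar ℓC : C(I01, Fin (d+2) → ℝ)) (θ : ℝ) (κ : ℕ) (c : ℕ → ℝ)
    (δ : ℝ) (t : ℝ) : Fin (d+2) → ℝ :=
  fun i => cvec d c i + ∫ s in (0:ℝ)..t, gammaStarFull φstar ℓC θ κ c δ s i

/-! ## The controlled chain of the lower bound -/

/-- Mean of the control at step `l`: `ψ̇*(l/n)` if `l ≤ ⌊δn⌋`, or if `l ≥ ⌈δn⌉` and the
state is above the threshold; otherwise the mean `ρm l` of the natural increment law. -/
def ctrlMean {d : ℕ} (γs : ℝ → Fin (d+2) → ℝ) (ρm : ℕ → Fin (d+2) → ℝ)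
    (Xb : ℕ → Fin (d+2) → ℝ) (c : ℕ → ℝ) (e : Fin (d+2) → ℝ) (θ δ : ℝ) (n l : ℕ) :
    Fin (d+2) → ℝ :=
  if l ≤ ⌊δ * (n : ℝ)⌋₊ ∨ (⌈δ * (n : ℝ)⌉₊ ≤ l ∧ ∀ i, (θ/4) * (e i * δ + cvec d c i) ≤ Xb l i)
  then γs ((l : ℝ) / n) else ρm l

/-- The martingale `M^n(j) = X̄^n(j) - (1/n) Σ_{l<j} Ē(Ȳ^n(l) | X̄^n(l)) - c^d`. -/
def ctrlMart {d : ℕ} (γs : ℝ → Fin (d+2) → ℝ) (ρm : ℕ → Fin (d+2) → ℝ)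
    (Xb : ℕ → Fin (d+2) → ℝ) (c : ℕ → ℝ) (e : Fin (d+2) → ℝ) (θ δ : ℝ) (n j : ℕ) :
    Fin (d+2) → ℝ :=
  fun i => Xb j i - (1/(n:ℝ)) * ∑ l ∈ Finset.range j, ctrlMean γs ρm Xb c e θ δ n l i
    - cvec d c i

/-- The stopping time `τ_n = n ∧ min{⌈δn⌉ ≤ l ≤ n : X̄_i^n(l) < (θ/4)(e_i δ + c_i), some i}`. -/
def stopTau {d : ℕ} (Xb : ℕ → Fin (d+2) → ℝ) (c : ℕ → ℝ) (e : Fin (d+2) → ℝ)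
    (θ δ : ℝ) (n : ℕ) : ℕ :=
  sInf ({n} ∪ {l : ℕ | ⌈δ * (n : ℝ)⌉₊ ≤ l ∧ l ≤ n
    ∧ ∃ i, Xb l i < (θ/4) * (e i * δ + cvec d c i)})


/-- **Lemma (`τ_n = n` on `𝔸_n^c`).**  For `n ≥ δ^{-8}`, if the stopped martingale of the
controlled chain built from `ψ*` satisfies
`sup_{0≤j≤n} |M^n(j ∧ τ_n)| ≤ θ e_{d+1}/(4 n^{1/8})` (the event `𝔸_n^c`), then `τ_n = n`. -/
theorem stopping_time_equals_n
    (c : ℕ → ℝ) (cc ctil : ℝ) (hLIM : LIMc c cc ctil) (d : ℕ)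
    (φstar : C(I01, Fin (d+2) → ℝ)) (hφ : φstar ∈ Gamma d c)
    (e : Fin (d+2) → ℝ) (he : ∀ i, 0 < e i) (hes : ∑ i, e i = 1)
    (hie : ∑ i : Fin (d+2), ((i : ℕ) : ℝ) * e i ≤ 1)
    (helast : ∀ i, e (Fin.last (d+1)) ≤ e i)
    (ℓC : C(I01, Fin (d+2) → ℝ))
    (hℓ : ∀ (t : I01) (i : Fin (d+2)), ℓC t i = e i * (t : ℝ) + cvec d c i)
    (θ : ℝ) (hθ0 : 0 < θ) (hθ1 : θ ≤ 1) (κ : ℕ) (hκ : 1 ≤ κ)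
    (δ : ℝ) (hδ0 : 0 < δ) (hδ1 : δ ≤ 1)
    (n : ℕ) (hn : δ⁻¹ ^ (8 : ℕ) ≤ (n : ℝ))
    (hLB : ∀ j : ℕ, ⌊δ * (n : ℝ)⌋₊ ≤ j → j ≤ n → ∀ i : Fin (d+2),
      (θ/2) * (e i * ((j : ℝ)/(n : ℝ)) + cvec d c i)
        ≤ (1/(n : ℝ)) * ∑ l ∈ Finset.range j,
            gammaStarFull φstar ℓC θ κ c δ ((l : ℝ)/(n : ℝ)) i
          + cvec d c i)
    (Xb : ℕ → Fin (d+2) → ℝ) (hX0 : Xb 0 = cvec d c)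
    (ρm : ℕ → Fin (d+2) → ℝ)
    (hM : ∀ j ≤ n,
      l1norm (ctrlMart (gammaStarFull φstar ℓC θ κ c δ) ρm Xb c e θ δ n
          (min j (stopTau Xb c e θ δ n)))
        ≤ θ * e (Fin.last (d+1)) / (4 * (n : ℝ) ^ ((1 : ℝ)/8))) :
    stopTau Xb c e θ δ n = n := by
  set γs := gammaStarFull φstar ℓC θ κ c δ with hγs
  set τ := stopTau Xb c e θ δ n with hτdef
  by_contra hne
  have hτle : τ ≤ n := Nat.sInf_le (Or.inl rfl)
  have hmem : τ ∈ ({n} ∪ {l : ℕ | ⌈δ * (n : ℝ)⌉₊ ≤ l ∧ l ≤ n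
      ∧ ∃ i, Xb l i < (θ/4) * (e i * δ + cvec d c i)} : Set ℕ) :=
    Nat.sInf_mem ⟨n, Or.inl rfl⟩
  rcases hmem with h | h
  · exact hne h
  obtain ⟨hτceil, hτn, i, hbad⟩ := h
  -- basic positivity facts
  have hδinv : (1:ℝ) ≤ δ⁻¹ := (one_le_inv_iff₀.mpr ⟨hδ0, hδ1⟩)
  have hn1 : (1:ℝ) ≤ (n:ℝ) := le_trans (one_le_pow₀ hδinv) hn
  have hnpos : (0:ℝ) < n := lt_of_lt_of_le one_pos hn1
  have hrpos : (0:ℝ) < (n:ℝ) ^ ((1:ℝ)/8) := Real.rpow_pos_of_pos hnpos _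
  -- n^{1/8} ≥ δ⁻¹
  have hstep : δ⁻¹ ≤ (n:ℝ) ^ ((1:ℝ)/8) := by
    have h1 : ((δ⁻¹ ^ (8:ℕ) : ℝ)) ^ ((1:ℝ)/8) ≤ (n:ℝ) ^ ((1:ℝ)/8) :=
      Real.rpow_le_rpow (by positivity) hn (by norm_num)
    have h2 : ((δ⁻¹ ^ (8:ℕ) : ℝ)) ^ ((1:ℝ)/8) = δ⁻¹ := by
      rw [← Real.rpow_natCast δ⁻¹ 8, ← Real.rpow_mul (by positivity)]
      norm_num
    rwa [h2] at h1
  have hinvr : ((n:ℝ) ^ ((1:ℝ)/8))⁻¹ ≤ δ := by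
    have := inv_anti₀ (b := δ⁻¹) (a := (n:ℝ) ^ ((1:ℝ)/8)) (by positivity) hstep
    rwa [inv_inv] at this
  have hcnn : 0 ≤ cvec d c i := by
    unfold cvec
    split
    · exact hLIM.nonneg _
    · exact tsum_nonneg fun _ => hLIM.nonneg _
  -- the control equals γs before τ
  have hmean : ∀ l < τ, ∀ k, ctrlMean γs ρm Xb c e θ δ n l k = γs ((l:ℝ)/n) k := by
    intro l hl k
    unfold ctrlMean
    rw [if_pos]
    by_cases hlf : l ≤ ⌊δ * (n:ℝ)⌋₊
    · exact Or.inl hlf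
    · right
      have hcf := Nat.ceil_le_floor_add_one (δ * (n:ℝ))
      have hlc : ⌈δ * (n:ℝ)⌉₊ ≤ l := by omega
      refine ⟨hlc, ?_⟩
      intro j
      by_contra hj
      push_neg at hj
      have : τ ≤ l := Nat.sInf_le (Or.inr ⟨hlc, le_trans hl.le hτn, j, hj⟩)
      omega
  have hsum : ∑ l ∈ Finset.range τ, ctrlMean γs ρm Xb c e θ δ n l i
      = ∑ l ∈ Finset.range τ, γs ((l:ℝ)/n) i :=
    Finset.sum_congr rfl fun l hl => hmean l (Finset.mem_range.mp hl) i
  -- martingale bound at τ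
  have hMτ := hM τ hτn
  rw [min_self] at hMτ
  have habs : |ctrlMart γs ρm Xb c e θ δ n τ i|
      ≤ θ * e (Fin.last (d+1)) / (4 * (n:ℝ) ^ ((1:ℝ)/8)) := by
    refine le_trans ?_ hMτ
    exact Finset.single_le_sum (fun j _ => abs_nonneg (ctrlMart γs ρm Xb c e θ δ n τ j))
      (Finset.mem_univ i)
  have hmart : ctrlMart γs ρm Xb c e θ δ n τ i
      = Xb τ i - (1/(n:ℝ)) * ∑ l ∈ Finset.range τ, γs ((l:ℝ)/n) i - cvec d c i := by
    unfold ctrlMart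
    rw [hsum]
  rw [hmart] at habs
  -- lower bound on the running sum
  have hfl : ⌊δ * (n:ℝ)⌋₊ ≤ τ := le_trans (Nat.floor_le_ceil _) hτceil
  have hLBτ := hLB τ hfl hτn i
  -- τ/n ≥ δ
  have hτδ : δ ≤ (τ:ℝ)/(n:ℝ) := by
    have h1 : δ * (n:ℝ) ≤ (⌈δ * (n:ℝ)⌉₊ : ℝ) := Nat.le_ceil _
    have h2 : ((⌈δ * (n:ℝ)⌉₊ : ℕ) : ℝ) ≤ (τ:ℝ) := Nat.cast_le.mpr hτceil
    rw [le_div_iff₀ hnpos]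
    linarith
  -- e_last/n^{1/8} ≤ e i * δ
  have hkey : e (Fin.last (d+1)) / ((n:ℝ) ^ ((1:ℝ)/8)) ≤ e i * δ := by
    have h1 : e (Fin.last (d+1)) / ((n:ℝ) ^ ((1:ℝ)/8))
        ≤ e (Fin.last (d+1)) * δ := by
      rw [div_eq_mul_inv]
      exact mul_le_mul_of_nonneg_left hinvr (he _).le
    exact le_trans h1 (mul_le_mul_of_nonneg_right (helast i) hδ0.le)
  -- assemble the contradiction
  have hXlb : Xb τ i ≥ (θ/2) * (e i * ((τ:ℝ)/(n:ℝ)) + cvec d c i)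
      - θ * e (Fin.last (d+1)) / (4 * (n:ℝ) ^ ((1:ℝ)/8)) := by
    have habs' := abs_le.mp habs
    linarith [habs'.1, habs'.2, hLBτ]
  have hB : θ * e (Fin.last (d+1)) / (4 * (n:ℝ) ^ ((1:ℝ)/8))
      ≤ (θ/4) * (e i * δ) := by
    rw [div_eq_mul_inv, mul_inv, show (4:ℝ)⁻¹ * ((n:ℝ) ^ ((1:ℝ)/8))⁻¹
        = (1/4) * ((n:ℝ) ^ ((1:ℝ)/8))⁻¹ by ring]
    have : θ * e (Fin.last (d+1)) * ((1/4) * ((n:ℝ) ^ ((1:ℝ)/8))⁻¹)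
        = (θ/4) * (e (Fin.last (d+1)) / ((n:ℝ) ^ ((1:ℝ)/8))) := by
      rw [div_eq_mul_inv]; ring
    rw [this]
    exact mul_le_mul_of_nonneg_left hkey (by positivity)
  have hmono : (θ/2) * (e i * δ + cvec d c i)
      ≤ (θ/2) * (e i * ((τ:ℝ)/(n:ℝ)) + cvec d c i) :=
    mul_le_mul_of_nonneg_left
      (add_le_add_left (mul_le_mul_of_nonneg_left hτδ (he i).le) (cvec d c i))
      (by positivity)
  linarith [hbad, hXlb, hB, hmono, mul_nonneg hθ0.le hcnn]

end
end

section
/- For the controlled chain X̄^n driven by the controls built from ψ*, one has almost surely lim_{n→∞} sup_{0≤j≤n} |X̄^n(j) − (1/n)Σ_{l=0}^{j−1} ψ̇*(l/n) − c^d| = 0; in particular, the interpolated controlled paths converge uniformly to ψ* almost surely. -/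
open MeasureTheory Real Set Filter Topology
open scoped ENNReal

noncomputable section

attribute [local instance] Classical.propDecidable

/-! ### Auxiliary lemmas for the proof of a.s. convergence of the controlled chain -/

lemma aux_abs_deriv_le_one {f : ℝ → ℝ} (h : LipschitzWith 1 f) (x : ℝ) :
    |deriv f x| ≤ 1 := by
  have := norm_deriv_le_of_lipschitz (𝕜 := ℝ) (x₀ := x) h
  simpa using this

lemma aux_fvec_abs_le (d m : ℕ) (k : Fin (d+2)) : |fvec d m k| ≤ 1 := by
  unfold fvec
  split_ifs <;> first | (exfalso; omega) | norm_num

lemma aux_blockAvg_abs_le {d : ℕ} (φ : C(I01, Fin (d+2) → ℝ)) (κ : ℕ) (hκ : 1 ≤ κ)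
    (hlip : ∀ i, LipschitzWith 1 (fun t : ℝ => pext φ t i)) (t : ℝ) (i : Fin (d+2)) :
    |blockAvg φ κ t i| ≤ 1 := by
  have hκ0 : (0:ℝ) < (κ:ℝ) := by exact_mod_cast hκ
  set m : ℕ := min ⌊t * (κ:ℝ)⌋₊ (κ-1) with hm
  have hb : ∀ x ∈ Set.uIoc ((m:ℝ)/(κ:ℝ)) (((m:ℝ)+1)/(κ:ℝ)), ‖pderivC φ x i‖ ≤ 1 := by
    intro x _
    rw [Real.norm_eq_abs]
    exact aux_abs_deriv_le_one (hlip i) x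
  have hnorm := intervalIntegral.norm_integral_le_of_norm_le_const hb
  rw [Real.norm_eq_abs] at hnorm
  have harg : ((m:ℝ)+1)/(κ:ℝ) - (m:ℝ)/(κ:ℝ) = 1/(κ:ℝ) := by field_simp; ring
  rw [harg, abs_of_pos (one_div_pos.mpr hκ0), one_mul] at hnorm
  show |(κ:ℝ) * _| ≤ 1
  rw [abs_mul, abs_of_pos hκ0]
  calc (κ:ℝ) * |∫ s in ((m:ℝ)/(κ:ℝ))..(((m:ℝ)+1)/(κ:ℝ)), pderivC φ s i|
      ≤ (κ:ℝ) * (1/(κ:ℝ)) := mul_le_mul_of_nonneg_left hnorm hκ0.le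
    _ = 1 := by field_simp

lemma aux_gammaStar_abs_le {d : ℕ} (φ : C(I01, Fin (d+2) → ℝ)) (κ : ℕ) (hκ : 1 ≤ κ)
    (hlip : ∀ i, LipschitzWith 1 (fun t : ℝ => pext φ t i)) (ts : ℕ → ℝ) (δ s : ℝ)
    (i : Fin (d+2)) :
    |gammaStar (fun t => blockAvg φ κ t) ts δ s i| ≤ 1 := by
  rw [gammaStar]
  split_ifs
  · exact aux_blockAvg_abs_le φ κ hκ hlip s i
  · exact aux_fvec_abs_le d (d+1) i
  · exact aux_fvec_abs_le d _ i

lemma aux_gamma_meas {d : ℕ} (φ : C(I01, Fin (d+2) → ℝ)) (κ : ℕ) (ts : ℕ → ℝ) (δ : ℝ)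
    (i : Fin (d+2)) :
    Measurable (fun s => gammaStar (fun t => blockAvg φ κ t) ts δ s i) := by
  have hmk : Monotone (fun s : ℝ => ((min ⌊s * (κ:ℝ)⌋₊ (κ-1) : ℕ) : ℝ)) := by
    intro a b hab
    have h1 : ⌊a * (κ:ℝ)⌋₊ ≤ ⌊b * (κ:ℝ)⌋₊ :=
      Nat.floor_mono (mul_le_mul_of_nonneg_right hab (Nat.cast_nonneg κ))
    dsimp only
    exact Nat.cast_le.mpr (min_le_min h1 le_rfl)
  have hms : Monotone (fun s : ℝ => ((sSup {i' : ℕ | i' ≤ d ∧ ts i' ≤ s} : ℕ) : ℝ)) := by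
    intro a b hab
    have hsub : {i' : ℕ | i' ≤ d ∧ ts i' ≤ a} ⊆ {i' : ℕ | i' ≤ d ∧ ts i' ≤ b} :=
      fun x hx => ⟨hx.1, hx.2.trans hab⟩
    rcases Set.eq_empty_or_nonempty {i' : ℕ | i' ≤ d ∧ ts i' ≤ a} with he | hne
    · dsimp only
      rw [he, csSup_empty]
      exact Nat.cast_le.mpr (Nat.zero_le _)
    · dsimp only
      exact Nat.cast_le.mpr (csSup_le_csSup ⟨d, fun x hx => hx.1⟩ hne hsub)
  set F1 : ℕ → ℝ :=
    (fun m : ℕ => (κ : ℝ) * ∫ x in ((m : ℝ)/κ)..(((m : ℝ) + 1)/κ), pderivC φ x i) with hF1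
  set F2 : ℕ → ℝ := (fun m : ℕ => fvec d m i) with hF2
  have heq : (fun s => gammaStar (fun t => blockAvg φ κ t) ts δ s i)
      = fun s => if δ ≤ s then F1 ⌊((min ⌊s * (κ:ℝ)⌋₊ (κ-1) : ℕ) : ℝ)⌋₊
        else if s < ts 0 then fvec d (d+1) i
        else F2 ⌊((sSup {i' : ℕ | i' ≤ d ∧ ts i' ≤ s} : ℕ) : ℝ)⌋₊ := by
    funext s
    rw [hF1, hF2]
    simp only [gammaStar, blockAvg, Nat.floor_natCast, apply_ite (fun v : Fin (d+2) → ℝ => v i)]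
  have hbr1 : Measurable (fun s : ℝ => F1 ⌊((min ⌊s * (κ:ℝ)⌋₊ (κ-1) : ℕ) : ℝ)⌋₊) :=
    Measurable.comp' measurable_from_top
      (Measurable.comp' Nat.measurable_floor hmk.measurable)
  have hbr2 : Measurable (fun s : ℝ => F2 ⌊((sSup {i' : ℕ | i' ≤ d ∧ ts i' ≤ s} : ℕ) : ℝ)⌋₊) :=
    Measurable.comp' measurable_from_top
      (Measurable.comp' Nat.measurable_floor hms.measurable)
  rw [heq]
  exact Measurable.ite (measurableSet_Ici (a := δ)) hbr1
    (Measurable.ite (measurableSet_Iio (a := ts 0)) measurable_const hbr2)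

lemma aux_gamma_const {d : ℕ} (φ : C(I01, Fin (d+2) → ℝ)) (κ : ℕ) (hκ : 1 ≤ κ)
    (ts : ℕ → ℝ) (δ : ℝ) (B : Finset ℝ) (hδB : δ ∈ B)
    (hκB : ∀ m : ℕ, m < κ → ((m:ℝ)/(κ:ℝ)) ∈ B) (htsB : ∀ i : ℕ, i ≤ d → ts i ∈ B)
    (s u : ℝ) (hsu : s ≤ u) (hB : ∀ b ∈ B, b ∉ Set.Ioc s u) :
    gammaStar (fun t => blockAvg φ κ t) ts δ s = gammaStar (fun t => blockAvg φ κ t) ts δ u := by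
  have hκ0 : (0:ℝ) < (κ:ℝ) := by exact_mod_cast hκ
  by_cases hδs : δ ≤ s
  · have hδu : δ ≤ u := hδs.trans hsu
    rw [gammaStar, gammaStar, if_pos hδs, if_pos hδu]
    have hmm : min ⌊s * (κ:ℝ)⌋₊ (κ-1) = min ⌊u * (κ:ℝ)⌋₊ (κ-1) := by
      by_contra hne
      have hmono : min ⌊s * (κ:ℝ)⌋₊ (κ-1) ≤ min ⌊u * (κ:ℝ)⌋₊ (κ-1) := by
        refine min_le_min ?_ le_rfl
        exact Nat.floor_mono (mul_le_mul_of_nonneg_right hsu (Nat.cast_nonneg κ))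
      have hlt : min ⌊s * (κ:ℝ)⌋₊ (κ-1) < min ⌊u * (κ:ℝ)⌋₊ (κ-1) := lt_of_le_of_ne hmono hne
      set m := min ⌊s * (κ:ℝ)⌋₊ (κ-1) with hmdef
      have hm1 : m < κ - 1 := lt_of_lt_of_le hlt (min_le_right _ _)
      have hma : m = ⌊s * (κ:ℝ)⌋₊ := by omega
      have hm2 : m + 1 ≤ ⌊u * (κ:ℝ)⌋₊ := by omega
      have hsb : s * (κ:ℝ) < (m:ℝ) + 1 := by
        have : ⌊s * (κ:ℝ)⌋₊ < m + 1 := by omega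
        have := (Nat.floor_lt' (Nat.succ_ne_zero m)).mp this
        push_cast at this
        linarith
      have hub : (m:ℝ) + 1 ≤ u * (κ:ℝ) := by
        have := (Nat.le_floor_iff' (Nat.succ_ne_zero m)).mp hm2
        push_cast at this
        linarith
      refine hB (((m+1 : ℕ):ℝ)/(κ:ℝ)) (hκB (m+1) (by omega)) ?_
      constructor
      · rw [lt_div_iff₀ hκ0]
        push_cast
        linarith
      · rw [div_le_iff₀ hκ0]
        push_cast
        linarith
    funext i
    simp only [blockAvg, hmm]
  · have hδu : ¬ δ ≤ u := by
      intro hδu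
      exact hB δ hδB ⟨lt_of_not_ge hδs, hδu⟩
    rw [gammaStar, gammaStar, if_neg hδs, if_neg hδu]
    by_cases h0 : u < ts 0
    · rw [if_pos (lt_of_le_of_lt hsu h0), if_pos h0]
    · have h0s : ¬ s < ts 0 := by
        intro hs0
        exact hB (ts 0) (htsB 0 (Nat.zero_le d)) ⟨hs0, le_of_not_gt h0⟩
      rw [if_neg h0s, if_neg h0]
      have hset : {i' : ℕ | i' ≤ d ∧ ts i' ≤ s} = {i' : ℕ | i' ≤ d ∧ ts i' ≤ u} := by
        ext i'
        constructor
        · rintro ⟨h1, h2⟩; exact ⟨h1, h2.trans hsu⟩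
        · rintro ⟨h1, h2⟩
          refine ⟨h1, ?_⟩
          by_contra h3
          exact hB (ts i') (htsB i' h1) ⟨lt_of_not_ge h3, h2⟩
      rw [hset]

lemma aux_riemann (g : ℝ → ℝ) (B : Finset ℝ)
    (hb : ∀ s, |g s| ≤ 1)
    (hint : ∀ a b : ℝ, IntervalIntegrable g volume a b)
    (hconst : ∀ s u : ℝ, s ≤ u → (∀ b ∈ B, b ∉ Set.Ioc s u) → g s = g u)
    (n : ℕ) (hn : 1 ≤ n) (j : ℕ) :
    |(1/(n:ℝ)) * ∑ l ∈ Finset.range j, g ((l:ℝ)/n) - ∫ s in (0:ℝ)..((j:ℝ)/n), g s|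
      ≤ (B.card : ℝ) * 2 / n := by
  classical
  have hn0 : (0:ℝ) < n := by exact_mod_cast hn
  have hsplit : (∫ s in (0:ℝ)..((j:ℝ)/n), g s)
      = ∑ l ∈ Finset.range j, ∫ s in ((l:ℝ)/n)..(((l:ℝ)+1)/n), g s := by
    have h := intervalIntegral.sum_integral_adjacent_intervals
      (a := fun k : ℕ => (k:ℝ)/n) (μ := volume) (f := g) (n := j) (fun k _ => hint _ _)
    simp only [Nat.cast_zero, zero_div, Nat.cast_add, Nat.cast_one] at h
    exact h.symm
  rw [hsplit, Finset.mul_sum, ← Finset.sum_sub_distrib]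
  set T : ℕ → ℝ := fun l => 1/(n:ℝ) * g ((l:ℝ)/n) - ∫ s in ((l:ℝ)/n)..(((l:ℝ)+1)/n), g s with hT
  have hTbound : ∀ l : ℕ, |T l| ≤ 2/n := by
    intro l
    have h1 : |1/(n:ℝ) * g ((l:ℝ)/n)| ≤ 1/n := by
      rw [abs_mul, abs_of_pos (by positivity : (0:ℝ) < 1/(n:ℝ))]
      calc 1/(n:ℝ) * |g ((l:ℝ)/n)| ≤ 1/(n:ℝ) * 1 :=
            mul_le_mul_of_nonneg_left (hb _) (by positivity)
        _ = 1/n := mul_one _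
    have h2 : |∫ s in ((l:ℝ)/n)..(((l:ℝ)+1)/n), g s| ≤ 1/n := by
      have hnm := intervalIntegral.norm_integral_le_of_norm_le_const (C := 1)
        (f := g) (a := ((l:ℝ)/n)) (b := (((l:ℝ)+1)/n))
        (fun x _ => by rw [Real.norm_eq_abs]; exact hb x)
      rw [Real.norm_eq_abs] at hnm
      have harg : ((l:ℝ)+1)/n - (l:ℝ)/n = 1/n := by field_simp; ring
      rw [harg, abs_of_pos (one_div_pos.mpr hn0), one_mul] at hnm
      exact hnm
    calc |T l| ≤ |1/(n:ℝ) * g ((l:ℝ)/n)| + |∫ s in ((l:ℝ)/n)..(((l:ℝ)+1)/n), g s| :=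
          abs_sub _ _
      _ ≤ 1/n + 1/n := add_le_add h1 h2
      _ = 2/n := by ring
  have hgood : ∀ l : ℕ, (∀ b ∈ B, b ∉ Set.Ioc ((l:ℝ)/n) (((l:ℝ)+1)/n)) → T l = 0 := by
    intro l hl
    have hle : (l:ℝ)/n ≤ ((l:ℝ)+1)/n := by gcongr; linarith
    have heqon : Set.EqOn g (fun _ => g ((l:ℝ)/n)) (Set.uIcc ((l:ℝ)/n) (((l:ℝ)+1)/n)) := by
      intro x hx
      rw [Set.uIcc_of_le hle] at hx
      refine (hconst ((l:ℝ)/n) x hx.1 ?_).symm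
      intro b hb hbmem
      exact hl b hb ⟨hbmem.1, hbmem.2.trans hx.2⟩
    have hci : (∫ s in ((l:ℝ)/n)..(((l:ℝ)+1)/n), g s)
        = ∫ _ in ((l:ℝ)/n)..(((l:ℝ)+1)/n), g ((l:ℝ)/n) :=
      intervalIntegral.integral_congr heqon
    have harg : ((l:ℝ)+1)/n - (l:ℝ)/n = 1/n := by field_simp; ring
    simp only [hT]
    rw [hci, intervalIntegral.integral_const, harg, smul_eq_mul]
    ring
  have habs : |∑ l ∈ Finset.range j, T l| ≤ ∑ l ∈ Finset.range j, |T l| :=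
    Finset.abs_sum_le_sum_abs _ _
  set p : ℕ → Prop := fun l => ∃ b ∈ B, b ∈ Set.Ioc ((l:ℝ)/n) (((l:ℝ)+1)/n) with hp
  have h2 : ∑ l ∈ Finset.range j, |T l| = ∑ l ∈ (Finset.range j).filter p, |T l| := by
    rw [Finset.sum_filter_of_ne]
    intro x _ hxne
    by_contra hpx
    simp only [hp, not_exists, not_and] at hpx
    exact hxne (by rw [hgood x (fun b hb => hpx b hb), abs_zero])
  have h3 : ∑ l ∈ (Finset.range j).filter p, |T l|
      ≤ ((Finset.range j).filter p).card • (2/(n:ℝ)) :=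
    Finset.sum_le_card_nsmul _ _ _ (fun x _ => hTbound x)
  have hcard : ((Finset.range j).filter p).card ≤ B.card := by
    apply Finset.card_le_card_of_injOn (fun l => if h : p l then h.choose else (0:ℝ))
    · intro a ha
      have hpa : p a := (Finset.mem_filter.mp ha).2
      simp only [dif_pos hpa]
      exact hpa.choose_spec.1
    · intro x hx y hy hxy
      by_contra hne
      have hpx : p x := (Finset.mem_filter.mp (Finset.mem_coe.mp hx)).2
      have hpy : p y := (Finset.mem_filter.mp (Finset.mem_coe.mp hy)).2
      dsimp only at hxy
      rw [dif_pos hpx, dif_pos hpy] at hxy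
      have hbx := hpx.choose_spec.2
      have hby := hpy.choose_spec.2
      rw [hxy] at hbx
      have hkey : ∀ x' y' : ℕ, x' < y' →
          hpy.choose ∈ Set.Ioc ((x':ℝ)/n) (((x':ℝ)+1)/n) →
          hpy.choose ∈ Set.Ioc ((y':ℝ)/n) (((y':ℝ)+1)/n) → False := by
        intro x' y' hxy' h1 h2'
        have hcast : ((x':ℝ)+1) ≤ (y':ℝ) := by
          have := Nat.succ_le_of_lt hxy'
          exact_mod_cast this
        have hd : ((x':ℝ)+1)/n ≤ (y':ℝ)/n := by gcongr
        have := h1.2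
        have := h2'.1
        linarith
      rcases Nat.lt_or_ge x y with h | h
      · exact hkey x y h hbx hby
      · exact hkey y x (lt_of_le_of_ne h fun he => hne he.symm) hby hbx
  calc |∑ l ∈ Finset.range j, T l| ≤ ∑ l ∈ Finset.range j, |T l| := habs
    _ = ∑ l ∈ (Finset.range j).filter p, |T l| := h2
    _ ≤ ((Finset.range j).filter p).card • (2/(n:ℝ)) := h3
    _ = (((Finset.range j).filter p).card : ℝ) * (2/n) := nsmul_eq_mul _ _
    _ ≤ (B.card : ℝ) * (2/n) := by
        apply mul_le_mul_of_nonneg_right _ (by positivity)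
        exact_mod_cast hcard
    _ = (B.card : ℝ) * 2 / n := by ring

lemma aux_mix_lip {d : ℕ} (φstar ℓC : C(I01, Fin (d+2) → ℝ)) (e : Fin (d+2) → ℝ)
    (c : ℕ → ℝ) (hℓ : ∀ (t : I01) (i : Fin (d+2)), ℓC t i = e i * (t : ℝ) + cvec d c i)
    (he0 : ∀ i, 0 ≤ e i) (he1 : ∀ i, e i ≤ 1) (θ : ℝ) (hθ0 : 0 ≤ θ) (hθ1 : θ ≤ 1)
    (hφlip : ∀ i, LipschitzWith 1 (fun t : ℝ => pext φstar t i)) (i : Fin (d+2)) :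
    LipschitzWith 1 (fun t : ℝ => pext (phiMix θ φstar ℓC) t i) := by
  have hproj : ∀ x y : ℝ,
      |((Set.projIcc 0 1 zero_le_one x : I01) : ℝ) - ((Set.projIcc 0 1 zero_le_one y : I01) : ℝ)|
        ≤ |x - y| := by
    intro x y
    have h := (LipschitzWith.projIcc (zero_le_one)).dist_le_mul x y
    rw [Subtype.dist_eq] at h
    simpa [Real.dist_eq] using h
  apply LipschitzWith.of_dist_le_mul
  intro x y
  have h1 := (hφlip i).dist_le_mul x y
  simp only [Real.dist_eq, NNReal.coe_one, one_mul] at h1 ⊢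
  have h2 := hproj x y
  have hx : pext (phiMix θ φstar ℓC) x i
      = (1-θ) * pext φstar x i
        + θ * (e i * ((Set.projIcc 0 1 zero_le_one x : I01) : ℝ) + cvec d c i) := by
    simp [pext, phiMix, hℓ, smul_eq_mul]
    try ring
  have hy : pext (phiMix θ φstar ℓC) y i
      = (1-θ) * pext φstar y i
        + θ * (e i * ((Set.projIcc 0 1 zero_le_one y : I01) : ℝ) + cvec d c i) := by
    simp [pext, phiMix, hℓ, smul_eq_mul]
    try ring
  rw [hx, hy]
  have hdiff : ((1-θ) * pext φstar x i
        + θ * (e i * ((Set.projIcc 0 1 zero_le_one x : I01) : ℝ) + cvec d c i))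
      - ((1-θ) * pext φstar y i
        + θ * (e i * ((Set.projIcc 0 1 zero_le_one y : I01) : ℝ) + cvec d c i))
      = (1-θ) * (pext φstar x i - pext φstar y i)
        + (θ * e i) * (((Set.projIcc 0 1 zero_le_one x : I01) : ℝ)
            - ((Set.projIcc 0 1 zero_le_one y : I01) : ℝ)) := by ring
  rw [hdiff]
  calc |(1-θ) * (pext φstar x i - pext φstar y i)
        + (θ * e i) * (((Set.projIcc 0 1 zero_le_one x : I01) : ℝ)
            - ((Set.projIcc 0 1 zero_le_one y : I01) : ℝ))|
      ≤ |(1-θ) * (pext φstar x i - pext φstar y i)|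
        + |(θ * e i) * (((Set.projIcc 0 1 zero_le_one x : I01) : ℝ)
            - ((Set.projIcc 0 1 zero_le_one y : I01) : ℝ))| := abs_add_le _ _
    _ = (1-θ) * |pext φstar x i - pext φstar y i|
        + (θ * e i) * |((Set.projIcc 0 1 zero_le_one x : I01) : ℝ)
            - ((Set.projIcc 0 1 zero_le_one y : I01) : ℝ)| := by
        rw [abs_mul, abs_mul, abs_of_nonneg (by linarith),
          abs_of_nonneg (mul_nonneg hθ0 (he0 i))]
    _ ≤ (1-θ) * |x - y| + (θ * e i) * |x - y| := by
        refine add_le_add (mul_le_mul_of_nonneg_left h1 (by linarith))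
          (mul_le_mul_of_nonneg_left h2 (mul_nonneg hθ0 (he0 i)))
    _ ≤ |x - y| := by
        nlinarith [mul_nonneg (mul_nonneg hθ0 (sub_nonneg.mpr (he1 i))) (abs_nonneg (x-y)),
          abs_nonneg (x-y)]

/-- **Lemma (a.s. convergence of the controlled chain).**  For the controlled chain driven
by the controls built from `ψ*`, almost surely
`lim_n sup_{0≤j≤n} |X̄^n(j) - (1/n)Σ_{l<j} ψ̇*(l/n) - c^d| = 0`; in particular the
interpolated controlled paths converge uniformly to `ψ*` almost surely. -/
theorem controlled_chain_convergence
    {Ω : Type*} [MeasurableSpace Ω] (μ : Measure Ω) [IsProbabilityMeasure μ]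
    (c : ℕ → ℝ) (cc ctil : ℝ) (hLIM : LIMc c cc ctil) (d : ℕ)
    (φstar : C(I01, Fin (d+2) → ℝ)) (hφ : φstar ∈ Gamma d c)
    (e : Fin (d+2) → ℝ) (he : ∀ i, 0 < e i) (hes : ∑ i, e i = 1)
    (hie : ∑ i : Fin (d+2), ((i : ℕ) : ℝ) * e i ≤ 1)
    (helast : ∀ i, e (Fin.last (d+1)) ≤ e i)
    (ℓC : C(I01, Fin (d+2) → ℝ))
    (hℓ : ∀ (t : I01) (i : Fin (d+2)), ℓC t i = e i * (t : ℝ) + cvec d c i)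
    (θ : ℝ) (hθ0 : 0 < θ) (hθ1 : θ ≤ 1) (κ : ℕ) (hκ : 1 ≤ κ)
    (δ : ℝ) (hδ0 : 0 < δ) (hδ1 : δ ≤ 1)
    (hLB : ∀ᶠ n : ℕ in atTop, ∀ j : ℕ, ⌊δ * (n : ℝ)⌋₊ ≤ j → j ≤ n → ∀ i : Fin (d+2),
      (θ/2) * (e i * ((j : ℝ)/(n : ℝ)) + cvec d c i)
        ≤ (1/(n : ℝ)) * ∑ l ∈ Finset.range j,
            gammaStarFull φstar ℓC θ κ c δ ((l : ℝ)/(n : ℝ)) i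
          + cvec d c i)
    (Xb : ℕ → ℕ → Ω → Fin (d+2) → ℝ) (hX0 : ∀ n ω, Xb n 0 ω = cvec d c)
    (ρm : ℕ → ℕ → Ω → Fin (d+2) → ℝ)
    (CC : ℝ)
    (hA : ∀ n : ℕ, 1 ≤ n →
      μ {ω | ∃ j ≤ n,
          θ * e (Fin.last (d+1)) / (4 * (n : ℝ) ^ ((1 : ℝ)/8))
            < l1norm (ctrlMart (gammaStarFull φstar ℓC θ κ c δ) (fun l => ρm n l ω)
                (fun j => Xb n j ω) c e θ δ n
                (min j (stopTau (fun j => Xb n j ω) c e θ δ n)))}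
        ≤ ENNReal.ofReal (CC * (n : ℝ) ^ (-(3 : ℝ)/2))) :
    (∀ᵐ ω ∂μ, ∀ ε > (0:ℝ), ∃ N : ℕ, ∀ n ≥ N, ∀ j ≤ n,
        l1norm (fun i => Xb n j ω i
          - (1/(n : ℝ)) * ∑ l ∈ Finset.range j,
              gammaStarFull φstar ℓC θ κ c δ ((l : ℝ)/(n : ℝ)) i
          - cvec d c i) ≤ ε)
    ∧ (∀ᵐ ω ∂μ, ∀ ε > (0:ℝ), ∃ N : ℕ, ∀ n ≥ N, ∀ t ∈ Set.Icc (0:ℝ) 1,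
        l1norm (fun i =>
          ((1 - ((n : ℝ) * t - (⌊(n : ℝ) * t⌋₊ : ℝ))) * Xb n ⌊(n : ℝ) * t⌋₊ ω i
            + ((n : ℝ) * t - (⌊(n : ℝ) * t⌋₊ : ℝ)) * Xb n (⌊(n : ℝ) * t⌋₊ + 1) ω i)
          - psiStarFull φstar ℓC θ κ c δ t i) ≤ ε) := by
  classical
  -- basic positivity facts
  have hc0 : ∀ i : Fin (d+2), 0 ≤ cvec d c i := by
    intro i
    unfold cvec
    split_ifs
    · exact hLIM.nonneg _
    · exact tsum_nonneg (fun k => hLIM.nonneg _)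
  have helast0 : 0 < e (Fin.last (d+1)) := he _
  have he1 : ∀ i, e i ≤ 1 := by
    intro i
    calc e i ≤ ∑ i', e i' := Finset.single_le_sum (fun j _ => (he j).le) (Finset.mem_univ i)
      _ = 1 := hes
  set γγ : ℝ → Fin (d+2) → ℝ := gammaStarFull φstar ℓC θ κ c δ with hγγ
  have hγγ' : γγ = gammaStar (fun t => blockAvg (phiMix θ φstar ℓC) κ t)
      (tSwitchFull φstar ℓC θ κ c δ) δ := by rw [hγγ]; rfl
  have hmixlip : ∀ i, LipschitzWith 1 (fun t : ℝ => pext (phiMix θ φstar ℓC) t i) :=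
    aux_mix_lip φstar ℓC e c hℓ (fun i => (he i).le) he1 θ hθ0.le hθ1 hφ.2.2.1
  have hgb : ∀ (s : ℝ) (i : Fin (d+2)), |γγ s i| ≤ 1 := by
    intro s i
    rw [hγγ']
    exact aux_gammaStar_abs_le (phiMix θ φstar ℓC) κ hκ hmixlip _ δ s i
  have hgm : ∀ i : Fin (d+2), Measurable (fun s => γγ s i) := by
    intro i
    rw [hγγ']
    exact aux_gamma_meas (phiMix θ φstar ℓC) κ (tSwitchFull φstar ℓC θ κ c δ) δ i
  have hII : ∀ (i : Fin (d+2)) (a b : ℝ), IntervalIntegrable (fun s => γγ s i) volume a b := by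
    intro i a b
    refine IntervalIntegrable.mono_fun' (g := fun _ => (1:ℝ)) intervalIntegrable_const
      ((hgm i).aestronglyMeasurable) ?_
    filter_upwards with x
    rw [Real.norm_eq_abs]
    exact hgb x i
  set Bset : Finset ℝ := insert δ (((Finset.range κ).image (fun m : ℕ => (m:ℝ)/(κ:ℝ)))
      ∪ ((Finset.range (d+1)).image (fun i' : ℕ => tSwitchFull φstar ℓC θ κ c δ i')))
    with hBset
  have hconstγ : ∀ s u : ℝ, s ≤ u → (∀ b ∈ Bset, b ∉ Set.Ioc s u) → γγ s = γγ u := by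
    intro s u hsu hb
    rw [hγγ']
    refine aux_gamma_const (phiMix θ φstar ℓC) κ hκ _ δ Bset ?_ ?_ ?_ s u hsu hb
    · exact Finset.mem_insert_self _ _
    · intro m hm
      exact Finset.mem_insert_of_mem (Finset.mem_union_left _
        (Finset.mem_image.mpr ⟨m, Finset.mem_range.mpr hm, rfl⟩))
    · intro i' hi'
      exact Finset.mem_insert_of_mem (Finset.mem_union_right _
        (Finset.mem_image.mpr ⟨i', Finset.mem_range.mpr (by omega), rfl⟩))
  have hRiem : ∀ n : ℕ, 1 ≤ n → ∀ (j : ℕ) (i : Fin (d+2)),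
      |(1/(n:ℝ)) * ∑ l ∈ Finset.range j, γγ ((l:ℝ)/(n:ℝ)) i
        - ∫ s in (0:ℝ)..((j:ℝ)/(n:ℝ)), γγ s i| ≤ (Bset.card : ℝ) * 2 / n := by
    intro n hn j i
    exact aux_riemann (fun s => γγ s i) Bset (fun s => hgb s i) (hII i)
      (fun s u hsu hB => congrFun (hconstγ s u hsu hB) i) n hn j
  -- Borel–Cantelli
  have hsumfin : (∑' n : ℕ, μ {ω | ∃ j ≤ n,
      θ * e (Fin.last (d+1)) / (4 * (n : ℝ) ^ ((1 : ℝ)/8))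
        < l1norm (ctrlMart γγ (fun l => ρm n l ω)
            (fun j => Xb n j ω) c e θ δ n
            (min j (stopTau (fun j => Xb n j ω) c e θ δ n)))}) ≠ ⊤ := by
    have hr : Summable (fun n : ℕ => max CC 0 * (n:ℝ) ^ (-(3:ℝ)/2)) :=
      (Real.summable_nat_rpow.mpr (by norm_num)).mul_left _
    have hrn : ∀ n : ℕ, 0 ≤ max CC 0 * (n:ℝ) ^ (-(3:ℝ)/2) :=
      fun n => mul_nonneg (le_max_right _ _) (Real.rpow_nonneg (Nat.cast_nonneg n) _)
    have hBnd : ∀ n : ℕ, μ {ω | ∃ j ≤ n,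
        θ * e (Fin.last (d+1)) / (4 * (n : ℝ) ^ ((1 : ℝ)/8))
          < l1norm (ctrlMart γγ (fun l => ρm n l ω)
              (fun j => Xb n j ω) c e θ δ n
              (min j (stopTau (fun j => Xb n j ω) c e θ δ n)))}
        ≤ (if n = 0 then 1 else 0) + ENNReal.ofReal (max CC 0 * (n:ℝ) ^ (-(3:ℝ)/2)) := by
      intro n
      rcases Nat.eq_zero_or_pos n with h0 | h1
      · subst h0
        simp only [if_pos rfl]
        exact le_trans prob_le_one le_self_add
      · rw [if_neg (by omega), zero_add]
        refine le_trans (hA n h1) (ENNReal.ofReal_le_ofReal ?_)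
        exact mul_le_mul_of_nonneg_right (le_max_left _ _)
          (Real.rpow_nonneg (Nat.cast_nonneg n) _)
    refine ne_top_of_le_ne_top ?_ (ENNReal.tsum_le_tsum hBnd)
    rw [ENNReal.tsum_add]
    refine ENNReal.add_ne_top.mpr ⟨?_, ?_⟩
    · rw [tsum_ite_eq]
      exact ENNReal.one_ne_top
    · rw [← ENNReal.ofReal_tsum_of_nonneg hrn hr]
      exact ENNReal.ofReal_ne_top
  have hBC : ∀ᵐ ω ∂μ, ∀ᶠ n : ℕ in atTop, ∀ j ≤ n,
      l1norm (ctrlMart γγ (fun l => ρm n l ω) (fun j => Xb n j ω) c e θ δ n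
          (min j (stopTau (fun j => Xb n j ω) c e θ δ n)))
        ≤ θ * e (Fin.last (d+1)) / (4 * (n : ℝ) ^ ((1 : ℝ)/8)) := by
    filter_upwards [MeasureTheory.ae_eventually_notMem hsumfin] with ω hω
    filter_upwards [hω] with n hn
    intro j hj
    by_contra hlt
    push_neg at hlt
    exact hn ⟨j, hj, hlt⟩
  -- key deterministic step
  have key : ∀ (X : ℕ → Fin (d+2) → ℝ) (ρ : ℕ → Fin (d+2) → ℝ) (n : ℕ), 1 ≤ n →
      1 ≤ δ * (n:ℝ) ^ ((1:ℝ)/8) →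
      (∀ j : ℕ, ⌊δ * (n : ℝ)⌋₊ ≤ j → j ≤ n → ∀ i : Fin (d+2),
        (θ/2) * (e i * ((j : ℝ)/(n : ℝ)) + cvec d c i)
          ≤ (1/(n : ℝ)) * ∑ l ∈ Finset.range j, γγ ((l : ℝ)/(n : ℝ)) i + cvec d c i) →
      (∀ j ≤ n, l1norm (ctrlMart γγ ρ X c e θ δ n (min j (stopTau X c e θ δ n)))
          ≤ θ * e (Fin.last (d+1)) / (4 * (n : ℝ) ^ ((1 : ℝ)/8))) →
      ∀ j ≤ n, l1norm (fun i => X j i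
          - (1/(n : ℝ)) * ∑ l ∈ Finset.range j, γγ ((l:ℝ)/(n:ℝ)) i - cvec d c i)
        ≤ θ * e (Fin.last (d+1)) / (4 * (n : ℝ) ^ ((1 : ℝ)/8)) := by
    intro X ρ n hn hbig hLBn H1
    have hn0 : (0:ℝ) < (n:ℝ) := by exact_mod_cast hn
    have hp8 : (0:ℝ) < (n:ℝ) ^ ((1:ℝ)/8) := Real.rpow_pos_of_pos hn0 _
    have hτle : stopTau X c e θ δ n ≤ n := Nat.sInf_le (Set.mem_union_left _ rfl)
    have hsub : ∀ l, l < stopTau X c e θ δ n →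
        ctrlMean γγ ρ X c e θ δ n l = γγ ((l:ℝ)/(n:ℝ)) := by
      intro l hl
      have hcond : l ≤ ⌊δ * (n:ℝ)⌋₊ ∨ (⌈δ * (n:ℝ)⌉₊ ≤ l
          ∧ ∀ i, (θ/4) * (e i * δ + cvec d c i) ≤ X l i) := by
        by_cases hfl : l ≤ ⌊δ * (n:ℝ)⌋₊
        · exact Or.inl hfl
        · refine Or.inr ⟨?_, ?_⟩
          · have := Nat.ceil_le_floor_add_one (δ * (n:ℝ)); omega
          · intro i
            by_contra hxi
            push_neg at hxi
            have hmem : l ∈ ({n} ∪ {l : ℕ | ⌈δ * (n : ℝ)⌉₊ ≤ l ∧ l ≤ n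
                ∧ ∃ i, X l i < (θ/4) * (e i * δ + cvec d c i)} : Set ℕ) := by
              refine Set.mem_union_right _ ⟨?_, ?_, ⟨i, hxi⟩⟩
              · have := Nat.ceil_le_floor_add_one (δ * (n:ℝ)); omega
              · omega
            have h1 := Nat.sInf_le hmem
            have h2 : stopTau X c e θ δ n
                = sInf ({n} ∪ {l : ℕ | ⌈δ * (n : ℝ)⌉₊ ≤ l ∧ l ≤ n
                    ∧ ∃ i, X l i < (θ/4) * (e i * δ + cvec d c i)} : Set ℕ) := rfl
            omega
      unfold ctrlMean
      rw [if_pos hcond]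
    have hτeq : stopTau X c e θ δ n = n := by
      have hne : ({n} ∪ {l : ℕ | ⌈δ * (n : ℝ)⌉₊ ≤ l ∧ l ≤ n
          ∧ ∃ i, X l i < (θ/4) * (e i * δ + cvec d c i)} : Set ℕ).Nonempty :=
        ⟨n, Set.mem_union_left _ rfl⟩
      have hmem : stopTau X c e θ δ n ∈ ({n} ∪ {l : ℕ | ⌈δ * (n : ℝ)⌉₊ ≤ l ∧ l ≤ n
          ∧ ∃ i, X l i < (θ/4) * (e i * δ + cvec d c i)} : Set ℕ) := Nat.sInf_mem hne
      rcases hmem with h | hS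
      · exact h
      · exfalso
        obtain ⟨hcl, hln, i0, hbad⟩ := hS
        have hH := H1 _ hln
        rw [min_self] at hH
        simp only [l1norm] at hH
        have hco : |ctrlMart γγ ρ X c e θ δ n (stopTau X c e θ δ n) i0|
            ≤ θ * e (Fin.last (d+1)) / (4 * (n : ℝ) ^ ((1 : ℝ)/8)) := by
          refine le_trans ?_ hH
          exact Finset.single_le_sum
            (f := fun i => |ctrlMart γγ ρ X c e θ δ n (stopTau X c e θ δ n) i|)
            (fun i _ => abs_nonneg _) (Finset.mem_univ i0)
        have hmean : ∑ l ∈ Finset.range (stopTau X c e θ δ n), ctrlMean γγ ρ X c e θ δ n l i0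
            = ∑ l ∈ Finset.range (stopTau X c e θ δ n), γγ ((l:ℝ)/(n:ℝ)) i0 :=
          Finset.sum_congr rfl (fun l hl => by rw [hsub l (Finset.mem_range.mp hl)])
        have hmart : ctrlMart γγ ρ X c e θ δ n (stopTau X c e θ δ n) i0
            = X (stopTau X c e θ δ n) i0
              - (1/(n:ℝ)) * ∑ l ∈ Finset.range (stopTau X c e θ δ n), γγ ((l:ℝ)/(n:ℝ)) i0
              - cvec d c i0 := by
          simp only [ctrlMart]
          rw [hmean]
        rw [hmart] at hco
        have hLB2 := hLBn _ (le_trans (Nat.floor_le_ceil _) hcl) hln i0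
        have hτδ : δ ≤ ((stopTau X c e θ δ n : ℕ):ℝ)/(n:ℝ) := by
          rw [le_div_iff₀ hn0]
          calc δ * (n:ℝ) ≤ (⌈δ * (n:ℝ)⌉₊ : ℝ) := Nat.le_ceil _
            _ ≤ _ := by exact_mod_cast hcl
        have hb1 : θ * e (Fin.last (d+1)) / (4 * (n:ℝ) ^ ((1:ℝ)/8)) ≤ θ/4 * (e i0 * δ) := by
          rw [div_le_iff₀ (by positivity)]
          have h1 : e (Fin.last (d+1)) ≤ e i0 := helast i0
          have e1 : θ * e (Fin.last (d+1)) * 1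
              ≤ θ * e (Fin.last (d+1)) * (δ * (n:ℝ) ^ ((1:ℝ)/8)) :=
            mul_le_mul_of_nonneg_left hbig (mul_nonneg hθ0.le helast0.le)
          have e2 : θ * e (Fin.last (d+1)) * (δ * (n:ℝ) ^ ((1:ℝ)/8))
              ≤ θ * e i0 * (δ * (n:ℝ) ^ ((1:ℝ)/8)) := by
            refine mul_le_mul_of_nonneg_right (mul_le_mul_of_nonneg_left h1 hθ0.le) ?_
            exact mul_nonneg hδ0.le hp8.le
          nlinarith [e1, e2]
        have h2 := (abs_le.mp hco).1
        have hmono : e i0 * δ ≤ e i0 * (((stopTau X c e θ δ n : ℕ):ℝ)/(n:ℝ)) :=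
          mul_le_mul_of_nonneg_left hτδ (he i0).le
        have hmono2 : θ/2 * (e i0 * δ + cvec d c i0)
            ≤ θ/2 * (e i0 * (((stopTau X c e θ δ n : ℕ):ℝ)/(n:ℝ)) + cvec d c i0) := by
          refine mul_le_mul_of_nonneg_left (by linarith) (by linarith)
        have hθc : 0 ≤ θ * cvec d c i0 := mul_nonneg hθ0.le (hc0 i0)
        linarith [hbad, hLB2, h2, hb1, hmono2, hθc]
    intro j hj
    have hH := H1 j hj
    rw [min_eq_left (by rw [hτeq]; exact hj)] at hH
    have heqf : ctrlMart γγ ρ X c e θ δ n j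
        = fun i => X j i - (1/(n:ℝ)) * ∑ l ∈ Finset.range j, γγ ((l:ℝ)/(n:ℝ)) i
            - cvec d c i := by
      funext i
      have hm : ∑ l ∈ Finset.range j, ctrlMean γγ ρ X c e θ δ n l i
          = ∑ l ∈ Finset.range j, γγ ((l:ℝ)/(n:ℝ)) i :=
        Finset.sum_congr rfl (fun l hl => by
          rw [hsub l (by rw [hτeq]; exact lt_of_lt_of_le (Finset.mem_range.mp hl) hj)])
      simp only [ctrlMart]
      rw [hm]
    rw [heqf] at hH
    exact hH
  -- eventual largeness
  have hev1 : ∀ᶠ n : ℕ in atTop, 1 ≤ δ * (n:ℝ) ^ ((1:ℝ)/8) := by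
    have h1 : Tendsto (fun n : ℕ => δ * (n:ℝ) ^ ((1:ℝ)/8)) atTop atTop :=
      ((tendsto_rpow_atTop (by norm_num : (0:ℝ) < 1/8)).comp
        tendsto_natCast_atTop_atTop).const_mul_atTop hδ0
    exact h1.eventually_ge_atTop 1
  have hbnd0 : Tendsto (fun n : ℕ =>
      θ * e (Fin.last (d+1)) / (4 * (n:ℝ) ^ ((1:ℝ)/8))) atTop (𝓝 0) := by
    apply Tendsto.div_atTop tendsto_const_nhds
    exact ((tendsto_rpow_atTop (by norm_num : (0:ℝ) < 1/8)).comp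
      tendsto_natCast_atTop_atTop).const_mul_atTop (by norm_num : (0:ℝ) < 4)
  constructor
  · -- first conclusion
    filter_upwards [hBC] with ω hω
    intro ε hε
    have hev2 : ∀ᶠ n : ℕ in atTop,
        θ * e (Fin.last (d+1)) / (4 * (n:ℝ) ^ ((1:ℝ)/8)) ≤ ε :=
      (hbnd0.eventually_lt_const hε).mono (fun n h => h.le)
    have hall := ((hω.and hev1).and hev2).and hLB
    rw [Filter.eventually_atTop] at hall
    obtain ⟨N, hN⟩ := hall
    refine ⟨max N 1, fun n hn j hj => ?_⟩
    obtain ⟨⟨⟨hωn, hbig⟩, hεn⟩, hLBn⟩ := hN n (le_trans (le_max_left _ _) hn)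
    have hn1 : 1 ≤ n := le_trans (le_max_right _ _) hn
    exact le_trans
      (key (fun j' => Xb n j' ω) (fun l => ρm n l ω) n hn1 hbig hLBn hωn j hj) hεn
  · -- second conclusion
    filter_upwards [hBC] with ω hω
    intro ε hε
    have hT0 : Tendsto (fun n : ℕ => ((d:ℝ)+2) *
        (θ * e (Fin.last (d+1)) / (4 * (n:ℝ) ^ ((1:ℝ)/8))
          + (Bset.card:ℝ)*2/(n:ℝ) + 2/(n:ℝ))) atTop (𝓝 0) := by
      have h2 := tendsto_const_div_atTop_nhds_zero_nat ((Bset.card:ℝ)*2)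
      have h3 := tendsto_const_div_atTop_nhds_zero_nat (2:ℝ)
      have h4 := ((hbnd0.add h2).add h3).const_mul ((d:ℝ)+2)
      simpa using h4
    have hev2 : ∀ᶠ n : ℕ in atTop, ((d:ℝ)+2) *
        (θ * e (Fin.last (d+1)) / (4 * (n:ℝ) ^ ((1:ℝ)/8))
          + (Bset.card:ℝ)*2/(n:ℝ) + 2/(n:ℝ)) ≤ ε :=
      (hT0.eventually_lt_const hε).mono (fun n h => h.le)
    have hall := ((hω.and hev1).and hev2).and hLB
    rw [Filter.eventually_atTop] at hall
    obtain ⟨N, hN⟩ := hall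
    refine ⟨max N 1, fun n hn t ht => ?_⟩
    obtain ⟨⟨⟨hωn, hbig⟩, hεn⟩, hLBn⟩ := hN n (le_trans (le_max_left _ _) hn)
    have hn1 : 1 ≤ n := le_trans (le_max_right _ _) hn
    have hn0 : (0:ℝ) < (n:ℝ) := by exact_mod_cast hn1
    have hD := key (fun j' => Xb n j' ω) (fun l => ρm n l ω) n hn1 hbig hLBn hωn
    have hDc : ∀ j', j' ≤ n → ∀ i : Fin (d+2),
        |Xb n j' ω i - (1/(n:ℝ)) * ∑ l ∈ Finset.range j', γγ ((l:ℝ)/(n:ℝ)) i - cvec d c i|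
          ≤ θ * e (Fin.last (d+1)) / (4 * (n:ℝ) ^ ((1:ℝ)/8)) := by
      intro j' hj' i
      refine le_trans ?_ (hD j' hj')
      simp only [l1norm]
      exact Finset.single_le_sum
        (f := fun i' => |Xb n j' ω i'
          - (1/(n:ℝ)) * ∑ l ∈ Finset.range j', γγ ((l:ℝ)/(n:ℝ)) i' - cvec d c i'|)
        (fun i' _ => abs_nonneg _) (Finset.mem_univ i)
    obtain ⟨ht0, ht1⟩ := ht
    have hnt0 : 0 ≤ (n:ℝ)*t := mul_nonneg hn0.le ht0
    have hjn : ⌊(n:ℝ)*t⌋₊ ≤ n := by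
      have h1 : (n:ℝ)*t ≤ ((n:ℕ):ℝ) := by
        calc (n:ℝ)*t ≤ (n:ℝ)*1 := mul_le_mul_of_nonneg_left ht1 hn0.le
          _ = (n:ℝ) := mul_one _
      calc ⌊(n:ℝ)*t⌋₊ ≤ ⌊((n:ℕ):ℝ)⌋₊ := Nat.floor_mono h1
        _ = n := Nat.floor_natCast n
    set j := ⌊(n:ℝ)*t⌋₊ with hjdef
    set w := (n:ℝ)*t - (j:ℝ) with hwdef
    have hjt : (j:ℝ) ≤ (n:ℝ)*t := by rw [hjdef]; exact Nat.floor_le hnt0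
    have hw0 : 0 ≤ w := by rw [hwdef]; linarith
    have hw1 : w ≤ 1 := by
      have hlt := Nat.lt_floor_add_one ((n:ℝ)*t)
      rw [← hjdef] at hlt
      rw [hwdef]; linarith
    have htj : t - (j:ℝ)/(n:ℝ) = w/(n:ℝ) := by
      rw [hwdef, sub_div, mul_comm (n:ℝ) t, mul_div_assoc, div_self hn0.ne', mul_one]
    have hjtle : (j:ℝ)/(n:ℝ) ≤ t := by
      rw [div_le_iff₀ hn0]; linarith
    have hcoord : ∀ i : Fin (d+2),
        |((1 - w) * Xb n j ω i + w * Xb n (j+1) ω i) - psiStarFull φstar ℓC θ κ c δ t i|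
          ≤ θ * e (Fin.last (d+1)) / (4 * (n:ℝ) ^ ((1:ℝ)/8))
            + (Bset.card:ℝ)*2/(n:ℝ) + 2/(n:ℝ) := by
      intro i
      have hpsi : psiStarFull φstar ℓC θ κ c δ t i
          = cvec d c i + ∫ s in (0:ℝ)..t, γγ s i := by
        rw [hγγ]
        simp only [psiStarFull]
      have hsplitI : (∫ s in (0:ℝ)..t, γγ s i)
          = (∫ s in (0:ℝ)..((j:ℝ)/(n:ℝ)), γγ s i) + ∫ s in ((j:ℝ)/(n:ℝ))..t, γγ s i :=
        (intervalIntegral.integral_add_adjacent_intervals (hII i 0 _) (hII i _ t)).symm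
      have hid : ((1 - w) * Xb n j ω i + w * Xb n (j+1) ω i)
            - psiStarFull φstar ℓC θ κ c δ t i
          = (1-w) * (Xb n j ω i
              - (1/(n:ℝ)) * ∑ l ∈ Finset.range j, γγ ((l:ℝ)/(n:ℝ)) i - cvec d c i)
            + w * (Xb n (j+1) ω i
              - (1/(n:ℝ)) * ∑ l ∈ Finset.range (j+1), γγ ((l:ℝ)/(n:ℝ)) i - cvec d c i)
            + ((1/(n:ℝ)) * ∑ l ∈ Finset.range j, γγ ((l:ℝ)/(n:ℝ)) i
              - ∫ s in (0:ℝ)..((j:ℝ)/(n:ℝ)), γγ s i)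
            + (w * ((1/(n:ℝ)) * γγ ((j:ℝ)/(n:ℝ)) i) - ∫ s in ((j:ℝ)/(n:ℝ))..t, γγ s i) := by
        rw [hpsi, hsplitI, Finset.sum_range_succ]
        ring
      rw [hid]
      have hA1 : |(1-w) * (Xb n j ω i
            - (1/(n:ℝ)) * ∑ l ∈ Finset.range j, γγ ((l:ℝ)/(n:ℝ)) i - cvec d c i)|
          ≤ (1-w) * (θ * e (Fin.last (d+1)) / (4 * (n:ℝ) ^ ((1:ℝ)/8))) := by
        rw [abs_mul, abs_of_nonneg (by linarith)]
        exact mul_le_mul_of_nonneg_left (hDc j hjn i) (by linarith)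
      have hA2 : |w * (Xb n (j+1) ω i
            - (1/(n:ℝ)) * ∑ l ∈ Finset.range (j+1), γγ ((l:ℝ)/(n:ℝ)) i - cvec d c i)|
          ≤ w * (θ * e (Fin.last (d+1)) / (4 * (n:ℝ) ^ ((1:ℝ)/8))) := by
        rcases eq_or_lt_of_le hjn with hje | hjl
        · have hje' : (j:ℝ) = (n:ℝ) := by exact_mod_cast hje
          have hle1 : (n:ℝ)*t ≤ (j:ℝ) := by
            rw [hje']
            calc (n:ℝ)*t ≤ (n:ℝ)*1 := mul_le_mul_of_nonneg_left ht1 hn0.le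
              _ = (n:ℝ) := mul_one _
          have hwz : w = 0 := le_antisymm (by rw [hwdef]; linarith) hw0
          rw [hwz, zero_mul, zero_mul, abs_zero]
        · rw [abs_mul, abs_of_nonneg hw0]
          exact mul_le_mul_of_nonneg_left (hDc (j+1) hjl i) hw0
      have hA3 := hRiem n hn1 j i
      have hA4 : |w * ((1/(n:ℝ)) * γγ ((j:ℝ)/(n:ℝ)) i) - ∫ s in ((j:ℝ)/(n:ℝ))..t, γγ s i|
          ≤ 1/(n:ℝ) + 1/(n:ℝ) := by
        have h41 : |w * ((1/(n:ℝ)) * γγ ((j:ℝ)/(n:ℝ)) i)| ≤ 1/(n:ℝ) := by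
          rw [abs_mul, abs_mul, abs_of_nonneg hw0, abs_of_pos (one_div_pos.mpr hn0)]
          calc w * (1/(n:ℝ) * |γγ ((j:ℝ)/(n:ℝ)) i|) ≤ 1 * (1/(n:ℝ) * 1) := by
                refine mul_le_mul hw1 ?_ (by positivity) (by norm_num)
                exact mul_le_mul_of_nonneg_left (hgb _ i) (by positivity)
            _ = 1/(n:ℝ) := by ring
        have h42 : |∫ s in ((j:ℝ)/(n:ℝ))..t, γγ s i| ≤ 1/(n:ℝ) := by
          have hnm := intervalIntegral.norm_integral_le_of_norm_le_const (C := 1)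
            (f := fun s => γγ s i) (a := (j:ℝ)/(n:ℝ)) (b := t)
            (fun x _ => by rw [Real.norm_eq_abs]; exact hgb x i)
          rw [Real.norm_eq_abs, one_mul] at hnm
          refine le_trans hnm ?_
          rw [abs_of_nonneg (by linarith), htj]
          gcongr
        calc |w * ((1/(n:ℝ)) * γγ ((j:ℝ)/(n:ℝ)) i) - ∫ s in ((j:ℝ)/(n:ℝ))..t, γγ s i|
            ≤ |w * ((1/(n:ℝ)) * γγ ((j:ℝ)/(n:ℝ)) i)|
              + |∫ s in ((j:ℝ)/(n:ℝ))..t, γγ s i| := abs_sub _ _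
          _ ≤ 1/(n:ℝ) + 1/(n:ℝ) := add_le_add h41 h42
      have habs4 : ∀ a b c' d' : ℝ, |a + b + c' + d'| ≤ |a| + |b| + |c'| + |d'| := by
        intro a b c' d'
        calc |a + b + c' + d'| ≤ |a + b + c'| + |d'| := abs_add_le _ _
          _ ≤ (|a + b| + |c'|) + |d'| := add_le_add (abs_add_le _ _) le_rfl
          _ ≤ ((|a| + |b|) + |c'|) + |d'| :=
              add_le_add (add_le_add (abs_add_le _ _) le_rfl) le_rfl
      have hsum4 := add_le_add (add_le_add (add_le_add hA1 hA2) hA3) hA4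
      refine le_trans (habs4 _ _ _ _) (le_trans hsum4 (le_of_eq ?_))
      ring
    have hfinal : l1norm (fun i => ((1 - w) * Xb n j ω i + w * Xb n (j+1) ω i)
          - psiStarFull φstar ℓC θ κ c δ t i)
        ≤ ((d:ℝ)+2) * (θ * e (Fin.last (d+1)) / (4 * (n:ℝ) ^ ((1:ℝ)/8))
            + (Bset.card:ℝ)*2/(n:ℝ) + 2/(n:ℝ)) := by
      simp only [l1norm]
      refine le_trans (Finset.sum_le_card_nsmul Finset.univ _ _ (fun i _ => hcoord i)) ?_
      rw [Finset.card_univ, Fintype.card_fin, nsmul_eq_mul]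
      apply le_of_eq
      push_cast
      ring
    exact le_trans hfinal hεn


end
end
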